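/- Let 0 < r < v_ref and let λ be a real number with λ ≥ λ_min(r). Then for every s ∈ ℝ with |s| ≤ r, φ(s)·(φ(s) + λ·s) ≤ 0 (the local sector condition on the friction nonlinearity). -/
import Mathlib


open Real

/-- The friction nonlinearity `F_nl`. -/
noncomputable def Fnl (m g vs muC muS : ℝ) (v : ℝ) : ℝ :=
  m * g * (muC + (muS - muC) * Real.exp (-(v ^ 2) / vs ^ 2)) * Real.sign v

lemma exp_lip_nonpos {a b : ℝ} (ha : a ≤ 0) (hb : b ≤ 0) :
    |Real.exp a - Real.exp b| ≤ |a - b| := by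
  wlog h : b ≤ a generalizing a b
  · rw [abs_sub_comm, abs_sub_comm a b]; exact this hb ha (le_of_not_ge h)
  rw [abs_of_nonneg (sub_nonneg.2 (Real.exp_le_exp.2 h)), abs_of_nonneg (sub_nonneg.2 h)]
  have h1 : 1 + (b - a) ≤ Real.exp (b - a) := by linarith [Real.add_one_le_exp (b - a)]
  have h2 : Real.exp (b - a) * Real.exp a = Real.exp b := by
    rw [← Real.exp_add]; ring_nf
  have h3 : Real.exp a ≤ 1 := Real.exp_le_one_iff.2 ha
  have h4 : 0 < Real.exp a := Real.exp_pos a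
  nlinarith [mul_le_mul_of_nonneg_right h1 h4.le, mul_le_mul_of_nonneg_left h3 (sub_nonneg.2 h)]

theorem stmt10 (m g vs muC muS vref : ℝ)
    (hm : 0 < m) (hg : 0 < g) (hvs : 0 < vs) (hmuC : 0 < muC) (hmu : muC < muS)
    (hvref : 0 < vref)
    (phi : ℝ → ℝ) (hphi : ∀ s, phi s = Fnl m g vs muC muS (s + vref) - Fnl m g vs muC muS vref)
    (lammin : ℝ → ℝ)
    (hlammin : ∀ r, lammin r = sSup {y : ℝ | ∃ s ∈ Set.Icc (-r) r, s ≠ 0 ∧ y = -phi s / s})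
    (r : ℝ) (hr : 0 < r) (hrv : r < vref)
    (lam : ℝ) (hlam : lammin r ≤ lam) :
    ∀ s : ℝ, |s| ≤ r → phi s * (phi s + lam * s) ≤ 0 := by
  set c : ℝ := m * g * (muS - muC) with hc
  have hcpos : 0 < c := by
    have h : 0 < muS - muC := by linarith
    rw [hc]; positivity
  -- formula for phi on |s| ≤ r
  have hphi' : ∀ s : ℝ, |s| ≤ r →
      phi s = c * (Real.exp (-((s + vref) ^ 2) / vs ^ 2) - Real.exp (-(vref ^ 2) / vs ^ 2)) := by
    intro s hs
    have hs1 : -r ≤ s := (abs_le.mp hs).1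
    have hpos : 0 < s + vref := by linarith
    rw [hphi, Fnl, Fnl, Real.sign_of_pos hpos, Real.sign_of_pos hvref]
    ring
  -- sign condition : phi s * s ≤ 0
  have hsign : ∀ s : ℝ, |s| ≤ r → phi s * s ≤ 0 := by
    intro s hs
    rw [hphi' s hs]
    rcases le_or_gt 0 s with h0 | h0
    · have hsq : vref ^ 2 ≤ (s + vref) ^ 2 := by nlinarith
      have : Real.exp (-((s + vref) ^ 2) / vs ^ 2) ≤ Real.exp (-(vref ^ 2) / vs ^ 2) := by
        apply Real.exp_le_exp.2
        apply div_le_div_of_nonneg_right ?_ (by positivity) |>.trans_eq rfl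
        · linarith
      have hφ : c * (Real.exp (-((s + vref) ^ 2) / vs ^ 2)
          - Real.exp (-(vref ^ 2) / vs ^ 2)) ≤ 0 := by nlinarith
      exact mul_nonpos_of_nonpos_of_nonneg hφ h0
    · have hs1 : -r ≤ s := (abs_le.mp hs).1
      have hsq : (s + vref) ^ 2 ≤ vref ^ 2 := by nlinarith
      have : Real.exp (-(vref ^ 2) / vs ^ 2) ≤ Real.exp (-((s + vref) ^ 2) / vs ^ 2) := by
        apply Real.exp_le_exp.2
        apply div_le_div_of_nonneg_right ?_ (by positivity) |>.trans_eq rfl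
        · linarith
      have hφ : 0 ≤ c * (Real.exp (-((s + vref) ^ 2) / vs ^ 2)
          - Real.exp (-(vref ^ 2) / vs ^ 2)) := by nlinarith
      exact mul_nonpos_of_nonneg_of_nonpos hφ h0.le
  -- Lipschitz-type bound
  set L : ℝ := c * (2 * vref + r) / vs ^ 2 with hL
  have hbound : ∀ s : ℝ, |s| ≤ r → |phi s| ≤ L * |s| := by
    intro s hs
    rw [hphi' s hs, abs_mul, abs_of_pos hcpos]
    have h1 : |Real.exp (-((s + vref) ^ 2) / vs ^ 2) - Real.exp (-(vref ^ 2) / vs ^ 2)|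
        ≤ |(-((s + vref) ^ 2) / vs ^ 2) - (-(vref ^ 2) / vs ^ 2)| :=
      exp_lip_nonpos (div_nonpos_of_nonpos_of_nonneg (neg_nonpos.2 (sq_nonneg _)) (sq_nonneg _))
        (div_nonpos_of_nonpos_of_nonneg (neg_nonpos.2 (sq_nonneg _)) (sq_nonneg _))
    have h2 : |(-((s + vref) ^ 2) / vs ^ 2) - (-(vref ^ 2) / vs ^ 2)|
        = |s * (s + 2 * vref)| / vs ^ 2 := by
      rw [div_sub_div_same, abs_div, abs_of_pos (by positivity : (0:ℝ) < vs ^ 2)]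
      congr 1
      rw [show -(s + vref) ^ 2 - -vref ^ 2 = -(s * (s + 2 * vref)) by ring, abs_neg]
    have h3 : |s * (s + 2 * vref)| ≤ |s| * (2 * vref + r) := by
      rw [abs_mul]
      apply mul_le_mul_of_nonneg_left ?_ (abs_nonneg s)
      calc |s + 2 * vref| ≤ |s| + |2 * vref| := abs_add_le _ _
        _ ≤ r + 2 * vref := by
            rw [abs_of_pos (by linarith : (0:ℝ) < 2 * vref)]; linarith
        _ = 2 * vref + r := by ring
    calc c * |Real.exp (-((s + vref) ^ 2) / vs ^ 2) - Real.exp (-(vref ^ 2) / vs ^ 2)|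
        ≤ c * (|s| * (2 * vref + r) / vs ^ 2) := by
          apply mul_le_mul_of_nonneg_left _ hcpos.le
          rw [h2] at h1
          calc |Real.exp (-((s + vref) ^ 2) / vs ^ 2) - Real.exp (-(vref ^ 2) / vs ^ 2)|
              ≤ |s * (s + 2 * vref)| / vs ^ 2 := h1
            _ ≤ |s| * (2 * vref + r) / vs ^ 2 :=
                div_le_div_of_nonneg_right h3 (by positivity)
      _ = L * |s| := by rw [hL]; ring
  -- the set is bounded above by L
  set S : Set ℝ := {y : ℝ | ∃ s ∈ Set.Icc (-r) r, s ≠ 0 ∧ y = -phi s / s} with hS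
  have hbdd : BddAbove S := by
    refine ⟨L, fun y hy => ?_⟩
    obtain ⟨s, hsIcc, hs0, rfl⟩ := hy
    have habs : |s| ≤ r := abs_le.mpr ⟨hsIcc.1, hsIcc.2⟩
    have hspos : 0 < |s| := abs_pos.mpr hs0
    calc -phi s / s ≤ |(-phi s) / s| := le_abs_self _
      _ = |phi s| / |s| := by rw [abs_div, abs_neg]
      _ ≤ L * |s| / |s| := div_le_div_of_nonneg_right (hbound s habs) hspos.le
      _ = L := by field_simp
  intro s hs
  rcases eq_or_ne s 0 with rfl | hs0
  · have : phi 0 = 0 := by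
      rw [hphi' 0 (by simpa using hr.le)]; simp
    rw [this]; simp
  · have hmem : -phi s / s ∈ S := ⟨s, ⟨(abs_le.mp hs).1, (abs_le.mp hs).2⟩, hs0, rfl⟩
    have hle : -phi s / s ≤ lam := le_trans (le_trans (le_csSup hbdd hmem)
      (by rw [hlammin r])) hlam
    have hmul := hsign s hs
    rcases hs0.lt_or_gt with hneg | hpos
    · have h1 : lam * s ≤ -phi s := (div_le_iff_of_neg hneg).mp hle
      have h2 : 0 ≤ phi s := by nlinarith
      exact mul_nonpos_iff.mpr (Or.inl ⟨h2, by linarith⟩)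
    · have h1 : -phi s ≤ lam * s := (div_le_iff₀ hpos).mp hle
      have h2 : phi s ≤ 0 := by nlinarith
      exact mul_nonpos_iff.mpr (Or.inr ⟨h2, by linarith⟩)
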